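/- Let k be an algebraically closed field, ℓ a non-trivial field extension of k, and V, W k-vector spaces. If there exist k-linear maps f, g : V → W such that for every pair of scalars λ, μ ∈ ℓ, not both zero, the ℓ-linear map Hom_k(λ,f) + Hom_k(μ,g) : Hom_k(ℓ,V) → Hom_k(ℓ,W) is an isomorphism, then V = 0 and W = 0. -/

import Mathlib

open Function Polynomial

/-- If post-composition with `p` is bijective on `Hom_k(ℓ, ·)`, then `p` is bijective. -/
lemma kq_comp_bij {k ℓ V W : Type*} [Field k] [Field ℓ] [Algebra k ℓ]
    [AddCommGroup V] [Module k V] [AddCommGroup W] [Module k W]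
    (p : V →ₗ[k] W)
    (hp : Function.Bijective fun φ : ℓ →ₗ[k] V => p.comp φ) :
    Function.Bijective p := by
  have hker : LinearMap.ker (LinearMap.toSpanSingleton k ℓ (1 : ℓ)) = ⊥ := by
    rw [LinearMap.ker_eq_bot]
    intro a b hab
    have : (a - b) • (1 : ℓ) = 0 := by
      simpa [sub_smul, sub_eq_zero] using sub_eq_zero.mpr hab
    rcases smul_eq_zero.mp this with h' | h'
    · exact sub_eq_zero.mp (by simpa using h')
    · exact absurd h' one_ne_zero
  obtain ⟨σ, hσ⟩ := (LinearMap.toSpanSingleton k ℓ (1 : ℓ)).exists_leftInverse_of_injective hker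
  have hσ1 : σ 1 = 1 := by
    have := congrArg (fun q => q (1 : k)) hσ
    simpa [LinearMap.toSpanSingleton] using this
  constructor
  · intro v₁ v₂ hv
    have hv0 : p (v₁ - v₂) = 0 := by rw [map_sub, sub_eq_zero]; exact hv
    set v := v₁ - v₂ with hvdef
    have h0 : p.comp (σ.smulRight v) = p.comp (0 : ℓ →ₗ[k] V) := by
      ext x; simp [LinearMap.smulRight_apply, map_smul, hv0]
    have := hp.injective h0
    have hv1 : σ.smulRight v 1 = (0 : ℓ →ₗ[k] V) 1 := by rw [this]
    have : v = 0 := by simpa [hσ1] using hv1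
    exact sub_eq_zero.mp this
  · intro w
    obtain ⟨φ, hφ⟩ := hp.surjective (σ.smulRight w)
    refine ⟨φ 1, ?_⟩
    have := congrArg (fun q => q (1 : ℓ)) hφ
    simpa [hσ1] using this

/-- Kronecker quiver lemma: if `k` is algebraically closed, `ℓ` a non-trivial field
extension of `k`, and `f g : V →ₗ[k] W` are such that `Hom_k(λ,f) + Hom_k(μ,g)` is an
isomorphism on `Hom_k(ℓ,-)` for all `(λ,μ) ≠ (0,0)` in `ℓ`, then `V = 0 = W`. -/
theorem stmt0 {k ℓ V W : Type*} [Field k] [IsAlgClosed k] [Field ℓ] [Algebra k ℓ]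
    (hℓ : ¬ Function.Surjective (algebraMap k ℓ))
    [AddCommGroup V] [Module k V] [AddCommGroup W] [Module k W]
    (f g : V →ₗ[k] W)
    (h : ∀ lam mu : ℓ, (lam ≠ 0 ∨ mu ≠ 0) →
      Function.Bijective (fun φ : ℓ →ₗ[k] V =>
        (f.comp (φ.comp (LinearMap.mulLeft k lam))) +
        (g.comp (φ.comp (LinearMap.mulLeft k mu))))) :
    Subsingleton V ∧ Subsingleton W := by
  classical
  have hf : Function.Bijective f := by
    have h10 := h 1 0 (Or.inl one_ne_zero)
    have heq : (fun φ : ℓ →ₗ[k] V =>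
        (f.comp (φ.comp (LinearMap.mulLeft k (1:ℓ)))) +
        (g.comp (φ.comp (LinearMap.mulLeft k (0:ℓ))))) = fun φ => f.comp φ := by
      funext φ; ext x; simp
    exact kq_comp_bij f (heq ▸ h10)
  -- bijectivity of g + c • f for all c : k
  have hgf : ∀ c : k, Function.Bijective (g + c • f) := by
    intro c
    have hc := h (algebraMap k ℓ c) 1 (Or.inr one_ne_zero)
    have heq : (fun φ : ℓ →ₗ[k] V =>
        (f.comp (φ.comp (LinearMap.mulLeft k (algebraMap k ℓ c)))) +
        (g.comp (φ.comp (LinearMap.mulLeft k (1:ℓ))))) = fun φ => (g + c • f).comp φ := by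
      funext φ; ext x
      have : algebraMap k ℓ c * x = c • x := by rw [Algebra.smul_def]
      simp [this, map_smul, add_comm]
    exact kq_comp_bij _ (heq ▸ hc)
  set e := LinearEquiv.ofBijective f hf with he
  set h' : V →ₗ[k] V := (e.symm : W →ₗ[k] V).comp g with hh'
  have hfh' : ∀ v, f (h' v) = g v := by
    intro v; simp only [hh', LinearMap.comp_apply, LinearEquiv.coe_coe]
    exact e.apply_symm_apply (g v)
  have hend : ∀ c : k, Function.Bijective (h' + c • LinearMap.id (R := k) (M := V)) := by
    intro c
    set hc' : V →ₗ[k] V := h' + c • LinearMap.id with hhc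
    have hcomp : ∀ v, (g + c • f) v = f (hc' v) := by
      intro v; simp [hhc, map_add, hfh', map_smul]
    have := (hgf c)
    constructor
    · intro a b hab
      exact this.injective (by rw [hcomp, hcomp, hab])
    · intro v
      obtain ⟨w, hw⟩ := this.surjective (f v)
      exact ⟨w, hf.injective (by rw [← hcomp, hw])⟩
  have hU : ∀ p : Polynomial k, p ≠ 0 →
      IsUnit ((Polynomial.aeval (h' : Module.End k V)) p) := by
    have key : ∀ n : ℕ, ∀ p : Polynomial k, p ≠ 0 → p.natDegree ≤ n →
        IsUnit ((Polynomial.aeval (h' : Module.End k V)) p) := by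
      intro n
      induction n with
      | zero =>
        intro p hp hdeg
        have : p = C (p.coeff 0) := Polynomial.eq_C_of_natDegree_le_zero hdeg
        rw [this, aeval_C]
        exact (isUnit_iff_ne_zero.mpr (fun hc => hp (by rw [this, hc, map_zero]))).map
          (algebraMap k (Module.End k V))
      | succ n ih =>
        intro p hp hdeg
        by_cases hd0 : p.natDegree = 0
        · have : p = C (p.coeff 0) := Polynomial.eq_C_of_natDegree_le_zero (le_of_eq hd0)
          rw [this, aeval_C]
          exact (isUnit_iff_ne_zero.mpr (fun hc => hp (by rw [this, hc, map_zero]))).map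
            (algebraMap k (Module.End k V))
        · obtain ⟨γ, hγ⟩ := IsAlgClosed.exists_root p (by
            intro hdeg0
            exact hd0 (Polynomial.natDegree_eq_zero_iff_degree_le_zero.mpr (le_of_eq hdeg0)))
          obtain ⟨q, hq⟩ := (Polynomial.dvd_iff_isRoot.mpr hγ)
          have hq0 : q ≠ 0 := by rintro rfl; exact hp (by simp [hq])
          have hXC : (X - C γ : Polynomial k) ≠ 0 := Polynomial.X_sub_C_ne_zero γ
          have hdq : q.natDegree ≤ n := by
            have := Polynomial.natDegree_mul hXC hq0
            rw [← hq] at this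
            have hx1 : (X - C γ : Polynomial k).natDegree = 1 := Polynomial.natDegree_X_sub_C γ
            omega
          have hu1 : IsUnit ((Polynomial.aeval (h' : Module.End k V)) (X - C γ)) := by
            rw [Module.End.isUnit_iff]
            have : ((Polynomial.aeval (h' : Module.End k V)) (X - C γ)) =
                (h' + (-γ) • LinearMap.id : V →ₗ[k] V) := by
              ext v; simp [sub_eq_add_neg, Algebra.algebraMap_eq_smul_one]
            rw [this]
            exact hend (-γ)
          have hu2 := ih q hq0 hdq
          rw [hq, map_mul]
          exact hu1.mul hu2
    exact fun p hp => key p.natDegree p hp le_rfl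
  -- pick a transcendental element
  rw [Function.Surjective] at hℓ
  push_neg at hℓ
  obtain ⟨α, hα⟩ := hℓ
  have htrans : ∀ p : Polynomial k, p ≠ 0 → (Polynomial.aeval α) p ≠ 0 := by
    intro p hp hav
    have halg : IsAlgebraic k α := ⟨p, hp, hav⟩
    have hint : IsIntegral k α := halg.isIntegral
    have hirr := minpoly.irreducible hint
    have hdeg := IsAlgClosed.degree_eq_one_of_irreducible k hirr
    obtain ⟨c, hc⟩ := minpoly.degree_eq_one_iff.mp hdeg
    exact hα c hc
  have hα0 : α ≠ 0 := by
    intro h0; exact hα 0 (by rw [map_zero, h0])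
  -- localization setup
  set Rp := Polynomial k
  set S := nonZeroDivisors Rp with hS
  set K := FractionRing Rp with hK
  have hSne : ∀ s : S, (s : Rp) ≠ 0 := fun s => nonZeroDivisors.ne_zero s.2
  -- ring hom K →+* ℓ
  have hunitℓ : ∀ s : S, IsUnit ((Polynomial.aeval α).toRingHom (s : Rp)) := fun s =>
    isUnit_iff_ne_zero.mpr (htrans s (hSne s))
  set Θℓ : K →+* ℓ := IsLocalization.lift (M := S) hunitℓ with hΘℓ
  have hΘℓ_eq : ∀ p : Rp, Θℓ (algebraMap Rp K p) = Polynomial.aeval α p := by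
    intro p; rw [hΘℓ, IsLocalization.lift_eq]; rfl
  -- commutative subalgebra of End containing h' and inverses
  set sc : Set (Module.End k V) := Set.centralizer (Set.centralizer {(h' : Module.End k V)})
    with hsc
  have hh'c : (h' : Module.End k V) ∈ Set.centralizer {(h' : Module.End k V)} := by
    intro m hm; rw [Set.mem_singleton_iff] at hm; rw [hm]
  have hmemsc : ∀ b : Module.End k V,
      (∀ m ∈ Set.centralizer {(h' : Module.End k V)}, Commute m b) → b ∈ sc := by
    intro b hb m hm; exact (hb m hm).eq
  have hcommsc : ∀ a ∈ sc, ∀ b ∈ sc, a * b = b * a := by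
    intro a ha b hb
    have hb' : b ∈ Set.centralizer {(h' : Module.End k V)} := by
      intro m hm; rw [Set.mem_singleton_iff] at hm; subst hm
      exact hb h' hh'c
    exact (ha b hb').symm
  have hh'sc : (h' : Module.End k V) ∈ sc := by
    apply hmemsc; intro m hm
    exact Commute.symm (hm h' rfl)
  set B := Algebra.adjoin k sc with hB
  letI : CommRing B := Algebra.adjoinCommRingOfComm k hcommsc
  have hmem_aeval : ∀ p : Rp, (Polynomial.aeval (h' : Module.End k V)) p ∈ B := by
    intro p
    exact Algebra.adjoin_mono (Set.singleton_subset_iff.mpr hh'sc)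
      (Polynomial.aeval_mem_adjoin_singleton k _)
  set ψB : Rp →ₐ[k] B :=
    AlgHom.codRestrict (Polynomial.aeval (h' : Module.End k V)) B hmem_aeval with hψB
  have hcomm_aeval : ∀ (m : Module.End k V) (p : Rp), Commute m h' →
      Commute m ((Polynomial.aeval (h' : Module.End k V)) p) := by
    intro m p hm
    exact Algebra.commute_of_mem_adjoin_singleton_of_commute
      (Polynomial.aeval_mem_adjoin_singleton k _) hm
  have hunitV : ∀ s : S, IsUnit (ψB.toRingHom (s : Rp)) := by
    intro s
    have hu := hU s (hSne s)
    have hinv_mem : ((hu.unit⁻¹ : (Module.End k V)ˣ) : Module.End k V) ∈ sc := by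
      apply hmemsc; intro m hm
      have hmh : Commute m (h' : Module.End k V) := Commute.symm (hm h' rfl)
      have hmu : Commute m ((Polynomial.aeval (h' : Module.End k V)) (s : Rp)) :=
        hcomm_aeval m _ hmh
      have : Commute m (hu.unit : Module.End k V) := by rwa [IsUnit.unit_spec]
      exact this.units_inv_right
    refine isUnit_iff_exists.mpr ⟨⟨((hu.unit⁻¹ : (Module.End k V)ˣ) : Module.End k V),
      Algebra.subset_adjoin hinv_mem⟩, Subtype.ext ?_, Subtype.ext ?_⟩
    · show (Polynomial.aeval (h' : Module.End k V)) (s : Rp) *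
        ((hu.unit⁻¹ : (Module.End k V)ˣ) : Module.End k V) = 1
      exact IsUnit.mul_val_inv hu
    · show ((hu.unit⁻¹ : (Module.End k V)ˣ) : Module.End k V) *
        (Polynomial.aeval (h' : Module.End k V)) (s : Rp) = 1
      exact IsUnit.val_inv_mul hu
  set ΘV : K →+* Module.End k V :=
    (B.val.toRingHom).comp (IsLocalization.lift (M := S) hunitV) with hΘV
  have hΘV_eq : ∀ p : Rp, ΘV (algebraMap Rp K p) = (Polynomial.aeval (h' : Module.End k V)) p := by
    intro p
    rw [hΘV, RingHom.comp_apply, IsLocalization.lift_eq]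
    rfl
  -- K-module structures
  letI : Module K ℓ := Module.compHom ℓ Θℓ
  letI : Module K V := Module.compHom V ΘV
  have hsmulℓ : ∀ (r : K) (x : ℓ), r • x = Θℓ r * x := fun r x => rfl
  have hsmulV : ∀ (r : K) (w : V), r • w = ΘV r w := fun r w => rfl
  have hK1 : ∀ (c : k) (x : ℓ), (algebraMap Rp K (Polynomial.C c)) • x = c • x := by
    intro c x
    rw [hsmulℓ, hΘℓ_eq, Polynomial.aeval_C, Algebra.smul_def]
  have hKV : ∀ (c : k) (w : V), (algebraMap Rp K (Polynomial.C c)) • w = c • w := by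
    intro c w
    rw [hsmulV, hΘV_eq, Polynomial.aeval_C]
    show ((algebraMap k (Module.End k V)) c) w = c • w
    rw [Module.algebraMap_end_apply]
  have hXℓ : ∀ x : ℓ, (algebraMap Rp K Polynomial.X) • x = α * x := by
    intro x; rw [hsmulℓ, hΘℓ_eq, Polynomial.aeval_X]
  have hXV : ∀ w : V, (algebraMap Rp K Polynomial.X) • w = h' w := by
    intro w; rw [hsmulV, hΘV_eq, Polynomial.aeval_X]
  -- every vector of V is zero
  have hall : ∀ v : V, v = 0 := by
    intro v
    by_contra hv
    have h1ne : (1 : ℓ) ≠ 0 := one_ne_zero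
    have hli : LinearIndepOn K (id : ℓ → ℓ) {(1 : ℓ)} := (linearIndepOn_singleton_iff K).mpr h1ne
    set b := Module.Basis.extend hli with hb
    have h1mem : (1 : ℓ) ∈ hli.extend (Set.subset_univ _) :=
      hli.subset_extend _ rfl
    set θK : ℓ →ₗ[K] V := b.constr K (fun i => if (i : ℓ) = 1 then v else 0) with hθK
    have hθ1 : θK 1 = v := by
      have h1b : (1 : ℓ) = b ⟨1, h1mem⟩ := (Module.Basis.extend_apply_self hli ⟨1, h1mem⟩).symm
      rw [h1b, hθK, Module.Basis.constr_basis]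
      simp
    set φ : ℓ →ₗ[k] V :=
      { toFun := θK
        map_add' := fun x y => θK.map_add x y
        map_smul' := fun c x => by
          have h1 : c • x = (algebraMap Rp K (Polynomial.C c)) • x := (hK1 c x).symm
          show θK (c • x) = c • θK x
          rw [h1, θK.map_smul, hKV] } with hφ
    have hφ1 : φ 1 = v := hθ1
    have hkey : ∀ x : ℓ, φ (α * x) = h' (φ x) := by
      intro x
      have hx : α * x = (algebraMap Rp K Polynomial.X) • x := (hXℓ x).symm
      show θK (α * x) = h' (θK x)
      rw [hx, θK.map_smul, hXV]
    have hbij := h α (-1) (Or.inl hα0)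
    have hzero : (f.comp (φ.comp (LinearMap.mulLeft k α))) +
        (g.comp (φ.comp (LinearMap.mulLeft k (-1 : ℓ)))) =
        (f.comp ((0 : ℓ →ₗ[k] V).comp (LinearMap.mulLeft k α))) +
        (g.comp ((0 : ℓ →ₗ[k] V).comp (LinearMap.mulLeft k (-1 : ℓ)))) := by
      ext x
      simp only [LinearMap.add_apply, LinearMap.comp_apply, LinearMap.mulLeft_apply,
        LinearMap.zero_apply, LinearMap.zero_comp, add_zero]
      rw [hkey x, hfh']
      have hm : (-1 : ℓ) * x = -x := by ring
      rw [hm, map_neg, map_neg, add_neg_cancel]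
      simp
    have hφ0 : φ = 0 := hbij.injective hzero
    rw [hφ0] at hφ1
    exact hv (by simpa using hφ1.symm)
  refine ⟨subsingleton_of_forall_eq 0 hall, ?_⟩
  haveI : Subsingleton V := subsingleton_of_forall_eq 0 hall
  exact hf.surjective.subsingleton
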